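/- In the Drinfeld–Jimbo-type quantification of type Aₙ, the Serre relations admit a quantification (i.e., the quantified relations are quantum operations / skew-primitive) if and only if the parameters satisfy p_{ii} = p₁₁, p_{i,i+1} p_{i+1,i} = p₁₁⁻¹, and p_{ij} p_{ji} = 1 for i − j > 1. -/

import Mathlib

open TensorProduct

section
open Coalgebra RingQuot

namespace QAux
variable (k : Type) [Field k] (n : ℕ) (G : Type) [CommGroup G] (χ : Fin n → G →* kˣ)

inductive QRel : FreeAlgebra k (G ⊕ Fin n) → FreeAlgebra k (G ⊕ Fin n) → Prop
  | grp (h₁ h₂ : G) : QRel (FreeAlgebra.ι k (.inl h₁) * FreeAlgebra.ι k (.inl h₂))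
      (FreeAlgebra.ι k (.inl (h₁ * h₂)))
  | gone : QRel (FreeAlgebra.ι k (.inl (1 : G))) 1
  | comm (i : Fin n) (h : G) :
      QRel (FreeAlgebra.ι k (.inr i) * FreeAlgebra.ι k (.inl h))
        (((χ i h : kˣ) : k) • (FreeAlgebra.ι k (.inl h) * FreeAlgebra.ι k (.inr i)))

abbrev Hu := RingQuot (QRel k n G χ)

noncomputable def γu (h : G) : Hu k n G χ := mkAlgHom k _ (FreeAlgebra.ι k (.inl h))

noncomputable def au (i : Fin n) : Hu k n G χ := mkAlgHom k _ (FreeAlgebra.ι k (.inr i))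

variable {k n G χ}

lemma γu_mul (h₁ h₂ : G) : γu k n G χ h₁ * γu k n G χ h₂ = γu k n G χ (h₁ * h₂) := by
  rw [γu, γu, γu, ← map_mul]; exact mkAlgHom_rel k (QRel.grp h₁ h₂)

lemma γu_one : γu k n G χ (1 : G) = 1 := by
  rw [γu]; rw [mkAlgHom_rel k QRel.gone, map_one]

lemma γu_comm (h₁ h₂ : G) : γu k n G χ h₁ * γu k n G χ h₂ = γu k n G χ h₂ * γu k n G χ h₁ := by
  rw [γu_mul, γu_mul, mul_comm]

lemma au_γu (i : Fin n) (h : G) :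
    au k n G χ i * γu k n G χ h = ((χ i h : kˣ) : k) • (γu k n G χ h * au k n G χ i) := by
  rw [au, γu, ← map_mul, ← map_mul, ← map_smul]; exact mkAlgHom_rel k (QRel.comm i h)

variable (k n G χ)

noncomputable def γmon : G →* Hu k n G χ where
  toFun := γu k n G χ
  map_one' := γu_one
  map_mul' a b := (γu_mul a b).symm

noncomputable def εu : Hu k n G χ →ₐ[k] k :=
  liftAlgHom k ⟨FreeAlgebra.lift k (Sum.elim (fun _ => (1 : k)) (fun _ => (0 : k))), by
    intro x y r
    induction r with
    | grp h₁ h₂ => simp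
    | gone => simp
    | comm i h => simp⟩

variable (g : Fin n → G)

noncomputable def Δu : Hu k n G χ →ₐ[k] Hu k n G χ ⊗[k] Hu k n G χ :=
  liftAlgHom k ⟨FreeAlgebra.lift k (Sum.elim
      (fun h => γu k n G χ h ⊗ₜ[k] γu k n G χ h)
      (fun i => au k n G χ i ⊗ₜ[k] 1 + γu k n G χ (g i) ⊗ₜ[k] au k n G χ i)), by
    intro x y r
    induction r with
    | grp h₁ h₂ => simp [Algebra.TensorProduct.tmul_mul_tmul, γu_mul]
    | gone => simp [γu_one, Algebra.TensorProduct.one_def]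
    | comm i h =>
        simp only [map_mul, map_smul, FreeAlgebra.lift_ι_apply, Sum.elim_inl, Sum.elim_inr,
          add_mul, mul_add, Algebra.TensorProduct.tmul_mul_tmul, one_mul, mul_one,
          au_γu, γu_comm (g i) h, ← TensorProduct.smul_tmul', TensorProduct.tmul_smul,
          smul_add]⟩

lemma Δu_γu (h : G) : Δu k n G χ g (γu k n G χ h) = γu k n G χ h ⊗ₜ[k] γu k n G χ h := by
  rw [Δu, γu, liftAlgHom_mkAlgHom_apply]; simp [γu]

lemma Δu_au (i : Fin n) :
    Δu k n G χ g (au k n G χ i)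
      = au k n G χ i ⊗ₜ[k] 1 + γu k n G χ (g i) ⊗ₜ[k] au k n G χ i := by
  rw [Δu, au, liftAlgHom_mkAlgHom_apply]; simp [γu, au]

lemma εu_γu (h : G) : εu k n G χ (γu k n G χ h) = 1 := by
  rw [εu, γu, liftAlgHom_mkAlgHom_apply]; simp

lemma εu_au (i : Fin n) : εu k n G χ (au k n G χ i) = 0 := by
  rw [εu, au, liftAlgHom_mkAlgHom_apply]; simp



lemma mk_inl (h : G) :
    mkAlgHom k (QRel k n G χ) (FreeAlgebra.ι k (.inl h)) = γu k n G χ h := rfl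

lemma mk_inr (i : Fin n) :
    mkAlgHom k (QRel k n G χ) (FreeAlgebra.ι k (.inr i)) = au k n G χ i := rfl

noncomputable def coalgHu : Coalgebra k (Hu k n G χ) where
  comul := (Δu k n G χ g).toLinearMap
  counit := (εu k n G χ).toLinearMap
  coassoc := by
    show (TensorProduct.assoc k (Hu k n G χ) (Hu k n G χ) (Hu k n G χ)).toLinearMap ∘ₗ
        LinearMap.rTensor (Hu k n G χ) (Δu k n G χ g).toLinearMap ∘ₗ (Δu k n G χ g).toLinearMap
      = LinearMap.lTensor (Hu k n G χ) (Δu k n G χ g).toLinearMap ∘ₗ (Δu k n G χ g).toLinearMap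
    have hco : (Algebra.TensorProduct.assoc k k k _ _ _).toAlgHom.comp
        ((Algebra.TensorProduct.map (Δu k n G χ g) (AlgHom.id k _)).comp (Δu k n G χ g))
      = (Algebra.TensorProduct.map (AlgHom.id k _) (Δu k n G χ g)).comp (Δu k n G χ g) := by
      ext x
      rcases x with h | i <;>
        simp [mk_inl, mk_inr, Δu_γu, Δu_au, TensorProduct.add_tmul, TensorProduct.tmul_add,
          Algebra.TensorProduct.one_def, add_assoc]
    have hr : ((Δu k n G χ g).toLinearMap.rTensor (Hu k n G χ))
        = (Algebra.TensorProduct.map (Δu k n G χ g) (AlgHom.id k _)).toLinearMap := by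
      apply TensorProduct.ext'; intro x y; simp
    have hl : ((Δu k n G χ g).toLinearMap.lTensor (Hu k n G χ))
        = (Algebra.TensorProduct.map (AlgHom.id k _) (Δu k n G χ g)).toLinearMap := by
      apply TensorProduct.ext'; intro x y; simp
    have ha : (TensorProduct.assoc k (Hu k n G χ) (Hu k n G χ) (Hu k n G χ)).toLinearMap
        = (Algebra.TensorProduct.assoc k k k _ _ _).toAlgHom.toLinearMap := by
      apply TensorProduct.ext_threefold; intro x y z; simp
    rw [hr, hl, ha, ← AlgHom.comp_toLinearMap, ← AlgHom.comp_toLinearMap,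
      ← AlgHom.comp_toLinearMap, hco]
  rTensor_counit_comp_comul := by
    show LinearMap.rTensor (Hu k n G χ) (εu k n G χ).toLinearMap ∘ₗ (Δu k n G χ g).toLinearMap
      = TensorProduct.mk k k (Hu k n G χ) 1
    have hco : (Algebra.TensorProduct.map (εu k n G χ) (AlgHom.id k _)).comp (Δu k n G χ g)
        = Algebra.TensorProduct.includeRight := by
      ext x
      rcases x with h | i <;>
        simp [mk_inl, mk_inr, Δu_γu, Δu_au, εu_γu, εu_au, TensorProduct.zero_tmul]
    have hr : ((εu k n G χ).toLinearMap.rTensor (Hu k n G χ))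
        = (Algebra.TensorProduct.map (εu k n G χ) (AlgHom.id k _)).toLinearMap := by
      apply TensorProduct.ext'; intro x y; simp
    have hmk : (TensorProduct.mk k k (Hu k n G χ) 1)
        = (Algebra.TensorProduct.includeRight :
            Hu k n G χ →ₐ[k] k ⊗[k] Hu k n G χ).toLinearMap := by
      apply LinearMap.ext; intro x; simp
    rw [hr, hmk, ← AlgHom.comp_toLinearMap, hco]
  lTensor_counit_comp_comul := by
    show LinearMap.lTensor (Hu k n G χ) (εu k n G χ).toLinearMap ∘ₗ (Δu k n G χ g).toLinearMap
      = (TensorProduct.mk k (Hu k n G χ) k).flip 1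
    have hco : (Algebra.TensorProduct.map (AlgHom.id k _) (εu k n G χ)).comp (Δu k n G χ g)
        = Algebra.TensorProduct.includeLeft := by
      ext x
      rcases x with h | i <;>
        simp [mk_inl, mk_inr, Δu_γu, Δu_au, εu_γu, εu_au, TensorProduct.tmul_zero]
    have hl : ((εu k n G χ).toLinearMap.lTensor (Hu k n G χ))
        = (Algebra.TensorProduct.map (AlgHom.id k _) (εu k n G χ)).toLinearMap := by
      apply TensorProduct.ext'; intro x y; simp
    have hmk : ((TensorProduct.mk k (Hu k n G χ) k).flip 1)
        = (Algebra.TensorProduct.includeLeft :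
            Hu k n G χ →ₐ[k] Hu k n G χ ⊗[k] k).toLinearMap := by
      apply LinearMap.ext; intro x; simp
    rw [hl, hmk, ← AlgHom.comp_toLinearMap, hco]

noncomputable def bialgHu : Bialgebra k (Hu k n G χ) :=
  letI := coalgHu k n G χ g
  Bialgebra.mk' k (Hu k n G χ)
    (map_one (εu k n G χ)) (fun {a b} => map_mul (εu k n G χ) a b)
    (map_one (Δu k n G χ g)) (fun {a b} => map_mul (Δu k n G χ g) a b)


-- Representation on the twisted monoid module
abbrev W := (G × FreeMonoid (Fin n)) →₀ k

noncomputable def Lop (h : G) : Module.End k (W k n G) :=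
  Finsupp.lmapDomain k k (fun p => (h * p.1, p.2))

noncomputable def Xop (i : Fin n) : Module.End k (W k n G) :=
  Finsupp.lsum k (fun p => ((χ i p.1 : kˣ) : k) • Finsupp.lsingle (p.1, FreeMonoid.of i * p.2))

variable {k n G χ}

lemma Lop_single (h a : G) (w : FreeMonoid (Fin n)) (c : k) :
    Lop k n G h (Finsupp.single (a, w) c) = Finsupp.single (h * a, w) c := by
  simp [Lop, Finsupp.mapDomain_single]

lemma Xop_single (i : Fin n) (a : G) (w : FreeMonoid (Fin n)) (c : k) :
    Xop k n G χ i (Finsupp.single (a, w) c)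
      = ((χ i a : kˣ) : k) • Finsupp.single (a, FreeMonoid.of i * w) c := by
  simp [Xop]

variable (k n G χ)

noncomputable def ρu : Hu k n G χ →ₐ[k] Module.End k (W k n G) :=
  liftAlgHom k ⟨FreeAlgebra.lift k (Sum.elim (Lop k n G) (Xop k n G χ)), by
    intro x y r
    induction r with
    | grp h₁ h₂ =>
        simp only [map_mul, FreeAlgebra.lift_ι_apply, Sum.elim_inl]
        apply Finsupp.lhom_ext; rintro ⟨a, w⟩ c
        simp [Module.End.mul_apply, Lop_single, mul_assoc]
    | gone =>
        simp only [FreeAlgebra.lift_ι_apply, Sum.elim_inl, map_one]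
        apply Finsupp.lhom_ext; rintro ⟨a, w⟩ c
        simp [Lop_single, Module.End.one_apply]
    | comm i h =>
        simp only [map_mul, map_smul, FreeAlgebra.lift_ι_apply, Sum.elim_inl, Sum.elim_inr]
        apply Finsupp.lhom_ext; rintro ⟨a, w⟩ c
        simp only [Module.End.mul_apply, Lop_single, Xop_single, map_smul, map_mul,
          Units.val_mul, smul_smul, LinearMap.smul_apply]⟩

noncomputable def φu : Hu k n G χ →ₗ[k] W k n G where
  toFun u := ρu k n G χ u (Finsupp.single ((1 : G), (1 : FreeMonoid (Fin n))) (1 : k))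
  map_add' u v := by simp [map_add]
  map_smul' c u := by simp [map_smul]

variable {k n G χ}

lemma ρu_γu (h : G) : ρu k n G χ (γu k n G χ h) = Lop k n G h := by
  rw [ρu, γu, liftAlgHom_mkAlgHom_apply]; simp

lemma ρu_au (i : Fin n) : ρu k n G χ (au k n G χ i) = Xop k n G χ i := by
  rw [ρu, au, liftAlgHom_mkAlgHom_apply]; simp

lemma Xop_one (i : Fin n) :
    Xop k n G χ i (Finsupp.single (1 : G × FreeMonoid (Fin n)) 1)
      = Finsupp.single ((1 : G), FreeMonoid.of i) 1 := by
  rw [Xop, show (1 : G × FreeMonoid (Fin n)) = ((1 : G), (1 : FreeMonoid (Fin n))) from rfl,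
    Finsupp.lsum_single]
  simp

lemma φu_au (i : Fin n) :
    φu k n G χ (au k n G χ i) = Finsupp.single ((1 : G), FreeMonoid.of i) 1 := by
  show ρu k n G χ (au k n G χ i) (Finsupp.single 1 1) = _
  rw [ρu_au, Xop_one]

lemma φu_au_au (i j : Fin n) :
    φu k n G χ (au k n G χ i * au k n G χ j)
      = Finsupp.single ((1 : G), FreeMonoid.of i * FreeMonoid.of j) 1 := by
  show ρu k n G χ (au k n G χ i * au k n G χ j) (Finsupp.single 1 1) = _
  rw [map_mul, Module.End.mul_apply, ρu_au, ρu_au, Xop_one, Xop_single]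
  simp

lemma φu_γu_au (h : G) (j : Fin n) :
    φu k n G χ (γu k n G χ h * au k n G χ j)
      = Finsupp.single (h, FreeMonoid.of j) 1 := by
  show ρu k n G χ (γu k n G χ h * au k n G χ j) (Finsupp.single 1 1) = _
  rw [map_mul, Module.End.mul_apply, ρu_au, ρu_γu, Xop_one, Lop_single]
  simp

lemma φu_γu_au_au (h : G) (i j : Fin n) :
    φu k n G χ (γu k n G χ h * (au k n G χ i * au k n G χ j))
      = Finsupp.single (h, FreeMonoid.of i * FreeMonoid.of j) 1 := by
  show ρu k n G χ (γu k n G χ h * (au k n G χ i * au k n G χ j)) (Finsupp.single 1 1) = _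
  rw [map_mul, Module.End.mul_apply, map_mul, Module.End.mul_apply, ρu_au, ρu_au, ρu_γu,
    Xop_one, Xop_single]
  simp [Lop_single]

lemma φu_γu_γu_au (h h' : G) (j : Fin n) :
    φu k n G χ (γu k n G χ h * (γu k n G χ h' * au k n G χ j))
      = Finsupp.single (h * h', FreeMonoid.of j) 1 := by
  show ρu k n G χ (γu k n G χ h * (γu k n G χ h' * au k n G χ j)) (Finsupp.single 1 1) = _
  rw [map_mul, Module.End.mul_apply, map_mul, Module.End.mul_apply, ρu_au, ρu_γu, ρu_γu,
    Xop_one, Lop_single, Lop_single]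
  simp [mul_comm]

-- coefficient functional
noncomputable def ψu (m₁ m₂ : G × FreeMonoid (Fin n)) :
    Hu k n G χ ⊗[k] Hu k n G χ →ₗ[k] k :=
  (TensorProduct.lid k k).toLinearMap ∘ₗ
    TensorProduct.map (Finsupp.lapply m₁ ∘ₗ φu k n G χ) (Finsupp.lapply m₂ ∘ₗ φu k n G χ)

lemma ψu_tmul (m₁ m₂ : G × FreeMonoid (Fin n)) (u v : Hu k n G χ) :
    ψu m₁ m₂ (u ⊗ₜ[k] v) = φu k n G χ u m₁ * φu k n G χ v m₂ := by
  simp [ψu, smul_eq_mul]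


lemma word_ne1 {i j : Fin n} (hij : i ≠ j) :
    FreeMonoid.of j * FreeMonoid.of i ≠ FreeMonoid.of i * FreeMonoid.of j := by
  intro h
  have := congrArg FreeMonoid.toList h
  simp at this
  exact hij this.2

lemma word_ne_single (i j l : Fin n) :
    FreeMonoid.of l ≠ FreeMonoid.of i * FreeMonoid.of j := by
  intro h
  have := congrArg FreeMonoid.toList h
  simp at this

lemma extract_c (g : Fin n → G) (i j : Fin n) (c : k)
    (E : c • ((γu k n G χ (g i) * au k n G χ j) ⊗ₜ[k] au k n G χ i) = 0) : c = 0 := by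
  have hE := congrArg (ψu (g i, FreeMonoid.of j) ((1 : G), FreeMonoid.of i)) E
  rw [map_zero, map_smul, ψu_tmul, φu_γu_au, φu_au, Finsupp.single_eq_same,
    Finsupp.single_eq_same] at hE
  simpa using hE

lemma extract_AC (g : Fin n → G) (i j : Fin n) (hij : i ≠ j) (A C p : k)
    (E : A • ((γu k n G χ (g i) * (au k n G χ i * au k n G χ j)) ⊗ₜ[k] au k n G χ i)
        - p • ((γu k n G χ (g i) * (au k n G χ j * au k n G χ i)) ⊗ₜ[k] au k n G χ i)
        + C • ((γu k n G χ (g i) * (γu k n G χ (g i) * au k n G χ j)) ⊗ₜ[k]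
            (au k n G χ i * au k n G χ i)) = 0) :
    A = 0 ∧ C = 0 := by
  constructor
  · have hA2 : ((g i, FreeMonoid.of j * FreeMonoid.of i) : G × FreeMonoid (Fin n))
        ≠ (g i, FreeMonoid.of i * FreeMonoid.of j) :=
      fun hp => word_ne1 hij (congrArg Prod.snd hp)
    have hA3 : ((g i * g i, FreeMonoid.of j) : G × FreeMonoid (Fin n))
        ≠ (g i, FreeMonoid.of i * FreeMonoid.of j) :=
      fun hp => word_ne_single i j j (congrArg Prod.snd hp)
    have hE := congrArg (ψu (g i, FreeMonoid.of i * FreeMonoid.of j)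
      ((1 : G), FreeMonoid.of i)) E
    rw [map_zero, map_add, map_sub, map_smul, map_smul, map_smul, ψu_tmul, ψu_tmul, ψu_tmul,
      φu_γu_au_au, φu_γu_au_au, φu_γu_γu_au, φu_au, φu_au_au] at hE
    rw [Finsupp.single_eq_same, Finsupp.single_eq_same, Finsupp.single_eq_of_ne' hA2,
      Finsupp.single_eq_of_ne' hA3] at hE
    simpa using hE
  · have hC : (((1 : G), FreeMonoid.of i) : G × FreeMonoid (Fin n))
        ≠ ((1 : G), FreeMonoid.of i * FreeMonoid.of i) :=
      fun hp => word_ne_single i i i (congrArg Prod.snd hp)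
    have hE := congrArg (ψu (g i * g i, FreeMonoid.of j)
      ((1 : G), FreeMonoid.of i * FreeMonoid.of i)) E
    rw [map_zero, map_add, map_sub, map_smul, map_smul, map_smul, ψu_tmul, ψu_tmul, ψu_tmul,
      φu_γu_au_au, φu_γu_au_au, φu_γu_γu_au, φu_au, φu_au_au] at hE
    simp only [Finsupp.single_eq_same, Finsupp.single_eq_of_ne' hC] at hE
    simpa using hE

variable {k H : Type} [CommRing k] [Ring H] [Bialgebra k H]

lemma swap_left {x X : H} {P : k} (h : x * X = P • (X * x)) (t : H) :
    x * (X * t) = P • (X * (x * t)) := by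
  rw [← mul_assoc, h, smul_mul_assoc, mul_assoc]

lemma swap_left' {Y X : H} (h : Y * X = X * Y) (t : H) :
    Y * (X * t) = X * (Y * t) := by
  rw [← mul_assoc, h, mul_assoc]

lemma L1 (x y X Y : H) (p q : k)
    (hx : comul (R := k) x = x ⊗ₜ[k] 1 + X ⊗ₜ[k] x)
    (hy : comul (R := k) y = y ⊗ₜ[k] 1 + Y ⊗ₜ[k] y)
    (hxY : x * Y = p • (Y * x)) (hyX : y * X = q • (X * y))
    (hXY : Y * X = X * Y) :
    comul (R := k) (x * y - p • (y * x))
      = (x * y - p • (y * x)) ⊗ₜ[k] 1 + (X * Y) ⊗ₜ[k] (x * y - p • (y * x))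
        + ((1 : k) - p * q) • ((X * y) ⊗ₜ[k] x) := by
  simp only [map_sub, map_smul, Bialgebra.comul_mul, hx, hy, add_mul, mul_add,
    Algebra.TensorProduct.tmul_mul_tmul, mul_one, one_mul, hxY, hyX, hXY,
    ← TensorProduct.smul_tmul', TensorProduct.tmul_smul, TensorProduct.sub_tmul,
    TensorProduct.tmul_sub]
  module

lemma L2 (x y X Y : H) (P p q : k)
    (hx : comul (R := k) x = x ⊗ₜ[k] 1 + X ⊗ₜ[k] x)
    (hy : comul (R := k) y = y ⊗ₜ[k] 1 + Y ⊗ₜ[k] y)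
    (hxX : x * X = P • (X * x))
    (hxY : x * Y = p • (Y * x)) (hyX : y * X = q • (X * y))
    (hXY : Y * X = X * Y) :
    comul (R := k) (x * (x * y - p • (y * x)) - (P * p) • ((x * y - p • (y * x)) * x))
      = (x * (x * y - p • (y * x)) - (P * p) • ((x * y - p • (y * x)) * x)) ⊗ₜ[k] 1
        + (X * (X * Y)) ⊗ₜ[k]
            (x * (x * y - p • (y * x)) - (P * p) • ((x * y - p • (y * x)) * x))
        + ((1 + P) * (1 - P * (p * q))) • ((X * (x * y)) ⊗ₜ[k] x)
        - (p * ((1 + P) * (1 - P * (p * q)))) • ((X * (y * x)) ⊗ₜ[k] x)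
        + ((1 - p * q) * (1 - P * (p * q))) • ((X * (X * y)) ⊗ₜ[k] (x * x)) := by
  have hb := L1 x y X Y p q hx hy hxY hyX hXY
  rw [map_sub, map_smul, Bialgebra.comul_mul, Bialgebra.comul_mul, hx, hb]
  simp only [add_mul, mul_add, mul_sub, sub_mul,
    smul_mul_assoc, mul_smul_comm, smul_smul,
    Algebra.TensorProduct.tmul_mul_tmul, mul_one, one_mul, mul_assoc,
    swap_left hxX, swap_left hxY, swap_left hyX, swap_left' hXY, hxX, hxY, hyX, hXY,
    ← TensorProduct.smul_tmul', TensorProduct.tmul_smul, TensorProduct.sub_tmul,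
    TensorProduct.tmul_sub, TensorProduct.smul_tmul_smul]
  module

end QAux

end

/-- Corollary: the type `Aₙ` Serre relations, with the Lie operation replaced
by the skew commutator, admit a quantification — i.e. the quantified Serre
polynomials take skew-primitive values in every Hopf algebra whenever the
variables take skew-primitive semi-invariant values — if and only if
`p_{ii} = p₁₁`, `p_{i,i+1} p_{i+1,i} = p₁₁⁻¹`, and `p_{ij} p_{ji} = 1` for
`|i−j| > 1`, where `p_{ij} = χ^{x_i}(g_{x_j})`.  (Here, as in Corollary 2.4,
`p_{ii}` is assumed not to be a primitive square root of unity.) -/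
theorem stmt_13 (k : Type) [Field k] (n : ℕ) (hn : 2 ≤ n)
    (G : Type) [CommGroup G] (g : Fin n → G) (χ : Fin n → G →* kˣ)
    (hroot : ∀ i : Fin n, ((χ i (g i) : kˣ) : k) ≠ -1) :
    (∀ (H : Type) [Ring H] [Bialgebra k H],
      ∀ (Γ : G →* Hˣ) (a : Fin n → H),
        (∀ h : G, Coalgebra.comul (R := k) ((Γ h : Hˣ) : H)
          = ((Γ h : Hˣ) : H) ⊗ₜ[k] ((Γ h : Hˣ) : H)) →
        (∀ i : Fin n, Coalgebra.comul (R := k) (a i)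
          = a i ⊗ₜ[k] 1 + ((Γ (g i) : Hˣ) : H) ⊗ₜ[k] a i) →
        (∀ (i : Fin n) (h : G),
          a i * ((Γ h : Hˣ) : H) = ((χ i h : kˣ) : k) • (((Γ h : Hˣ) : H) * a i)) →
        ∀ i j : Fin n, i ≠ j →
          ((((i : ℕ) + 1 = (j : ℕ)) ∨ ((j : ℕ) + 1 = (i : ℕ))) →
            (let b := a i * a j - ((χ i (g j) : kˣ) : k) • (a j * a i);
             let s := a i * b - ((χ i (g i * g j) : kˣ) : k) • (b * a i);
             Coalgebra.comul (R := k) s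
               = s ⊗ₜ[k] 1 + ((Γ (g i ^ 2 * g j) : Hˣ) : H) ⊗ₜ[k] s)) ∧
          ((((i : ℕ) + 1 < (j : ℕ)) ∨ ((j : ℕ) + 1 < (i : ℕ))) →
            (let b := a i * a j - ((χ i (g j) : kˣ) : k) • (a j * a i);
             Coalgebra.comul (R := k) b
               = b ⊗ₜ[k] 1 + ((Γ (g i * g j) : Hˣ) : H) ⊗ₜ[k] b)))
    ↔ ((∀ i : Fin n, χ i (g i) = χ ⟨0, by omega⟩ (g ⟨0, by omega⟩)) ∧
       (∀ i j : Fin n, (i : ℕ) + 1 = (j : ℕ) →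
          χ i (g j) * χ j (g i) = (χ ⟨0, by omega⟩ (g ⟨0, by omega⟩))⁻¹) ∧
       (∀ i j : Fin n, (i : ℕ) + 1 < (j : ℕ) → χ i (g j) * χ j (g i) = 1)) := by
  constructor
  · intro hmain
    letI : Bialgebra k (QAux.Hu k n G χ) := QAux.bialgHu k n G χ g
    letI : CoalgebraStruct k (QAux.Hu k n G χ) := Bialgebra.toCoalgebra.toCoalgebraStruct
    letI : Module k (QAux.Hu k n G χ) := (Bialgebra.toAlgebra (R := k)).toModule
    have key := hmain (QAux.Hu k n G χ) ((QAux.γmon k n G χ).toHomUnits) (QAux.au k n G χ)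
      (fun h => by exact QAux.Δu_γu k n G χ g h)
      (fun i => by exact QAux.Δu_au k n G χ g i)
      (fun i h => by exact QAux.au_γu i h)
    have hadj : ∀ i j : Fin n, i ≠ j → (((i:ℕ)+1 = (j:ℕ)) ∨ ((j:ℕ)+1 = (i:ℕ))) →
        χ i (g i) * (χ i (g j) * χ j (g i)) = 1 := by
      intro i j hij hor
      have hs : Coalgebra.comul (R := k) (QAux.au k n G χ i * (QAux.au k n G χ i * QAux.au k n G χ j - ((χ i (g j) : kˣ) : k) • (QAux.au k n G χ j * QAux.au k n G χ i)) - ((χ i (g i * g j) : kˣ) : k) • ((QAux.au k n G χ i * QAux.au k n G χ j - ((χ i (g j) : kˣ) : k) • (QAux.au k n G χ j * QAux.au k n G χ i)) * QAux.au k n G χ i))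
          = (QAux.au k n G χ i * (QAux.au k n G χ i * QAux.au k n G χ j - ((χ i (g j) : kˣ) : k) • (QAux.au k n G χ j * QAux.au k n G χ i)) - ((χ i (g i * g j) : kˣ) : k) • ((QAux.au k n G χ i * QAux.au k n G χ j - ((χ i (g j) : kˣ) : k) • (QAux.au k n G χ j * QAux.au k n G χ i)) * QAux.au k n G χ i)) ⊗ₜ[k] 1 + QAux.γu k n G χ (g i ^ 2 * g j) ⊗ₜ[k] (QAux.au k n G χ i * (QAux.au k n G χ i * QAux.au k n G χ j - ((χ i (g j) : kˣ) : k) • (QAux.au k n G χ j * QAux.au k n G χ i)) - ((χ i (g i * g j) : kˣ) : k) • ((QAux.au k n G χ i * QAux.au k n G χ j - ((χ i (g j) : kˣ) : k) • (QAux.au k n G χ j * QAux.au k n G χ i)) * QAux.au k n G χ i)) := (key i j hij).1 hor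
      rw [map_mul (χ i), Units.val_mul] at hs
      have hgrp : QAux.γu k n G χ (g i ^ 2 * g j)
          = QAux.γu k n G χ (g i) * (QAux.γu k n G χ (g i) * QAux.γu k n G χ (g j)) := by
        rw [QAux.γu_mul, QAux.γu_mul]; congr 1; rw [pow_two, mul_assoc]
      rw [hgrp] at hs
      have hL2 := QAux.L2 (QAux.au k n G χ i) (QAux.au k n G χ j) (QAux.γu k n G χ (g i)) (QAux.γu k n G χ (g j)) ((χ i (g i) : kˣ) : k) ((χ i (g j) : kˣ) : k) ((χ j (g i) : kˣ) : k)
        (by exact QAux.Δu_au k n G χ g i) (by exact QAux.Δu_au k n G χ g j)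
        (QAux.au_γu i (g i)) (QAux.au_γu i (g j)) (QAux.au_γu j (g i))
        (QAux.γu_comm (g j) (g i))
      have hE0 := sub_eq_zero_of_eq (hL2.symm.trans hs)
      have hE : ((1 + ((χ i (g i) : kˣ) : k)) * (1 - ((χ i (g i) : kˣ) : k) * (((χ i (g j) : kˣ) : k) * ((χ j (g i) : kˣ) : k)))) • ((QAux.γu k n G χ (g i) * (QAux.au k n G χ i * QAux.au k n G χ j)) ⊗ₜ[k] QAux.au k n G χ i) - (((χ i (g j) : kˣ) : k) * ((1 + ((χ i (g i) : kˣ) : k)) * (1 - ((χ i (g i) : kˣ) : k) * (((χ i (g j) : kˣ) : k) * ((χ j (g i) : kˣ) : k))))) • ((QAux.γu k n G χ (g i) * (QAux.au k n G χ j * QAux.au k n G χ i)) ⊗ₜ[k] QAux.au k n G χ i) + ((1 - ((χ i (g j) : kˣ) : k) * ((χ j (g i) : kˣ) : k)) * (1 - ((χ i (g i) : kˣ) : k) * (((χ i (g j) : kˣ) : k) * ((χ j (g i) : kˣ) : k)))) • ((QAux.γu k n G χ (g i) * (QAux.γu k n G χ (g i) * QAux.au k n G χ j)) ⊗ₜ[k]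 (QAux.au k n G χ i * QAux.au k n G χ i)) = 0 := by
        have key2 : ∀ {M : Type} [AddCommGroup M] (X a b c : M), a - b + c = X + a - b + c - X := by
          intros; abel
        rw [← hE0]; exact key2 (M := QAux.Hu k n G χ ⊗[k] QAux.Hu k n G χ) _ _ _ _
      obtain ⟨hA, hC⟩ := QAux.extract_AC g i j hij _ _ _ hE
      have h1P : (1 : k) + ((χ i (g i) : kˣ) : k) ≠ 0 := by intro h; apply hroot i; linear_combination h
      have hk1 : (1 : k) = ((χ i (g i) : kˣ) : k) * (((χ i (g j) : kˣ) : k) * ((χ j (g i) : kˣ) : k)) :=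
        sub_eq_zero.mp ((mul_eq_zero.mp hA).resolve_left h1P)
      exact Units.ext (by simpa [Units.val_mul] using hk1.symm)
    have hone : ∀ i j : Fin n, (i:ℕ)+1 = (j:ℕ) → χ i (g i) = χ j (g j) := by
      intro i j hv
      have hij : i ≠ j := by intro h; rw [h] at hv; omega
      have h1 := hadj i j hij (Or.inl hv)
      have h2 := hadj j i hij.symm (Or.inr hv)
      rw [mul_comm (χ j (g i)) (χ i (g j))] at h2
      rw [eq_inv_of_mul_eq_one_left h1, eq_inv_of_mul_eq_one_left h2]
    have cond1 : ∀ i : Fin n, χ i (g i) = χ ⟨0, by omega⟩ (g ⟨0, by omega⟩) := by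
      have hzero : ∀ m (hm : m < n), χ ⟨m, hm⟩ (g ⟨m, hm⟩)
          = χ ⟨0, by omega⟩ (g ⟨0, by omega⟩) := by
        intro m
        induction m with
        | zero => intro hm; rfl
        | succ m ih =>
            intro hm
            rw [← hone ⟨m, by omega⟩ ⟨m+1, hm⟩ rfl]
            exact ih (by omega)
      intro i
      have := hzero i.val i.isLt
      simpa using this
    refine ⟨cond1, ?_, ?_⟩
    · intro i j hv
      have hij : i ≠ j := by intro h; rw [h] at hv; omega
      have h1 := hadj i j hij (Or.inl hv)
      rw [← inv_eq_of_mul_eq_one_right h1, cond1 i]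
    · intro i j hv
      have hij : i ≠ j := by intro h; rw [h] at hv; omega
      have hb : Coalgebra.comul (R := k) (QAux.au k n G χ i * QAux.au k n G χ j - ((χ i (g j) : kˣ) : k) • (QAux.au k n G χ j * QAux.au k n G χ i))
          = (QAux.au k n G χ i * QAux.au k n G χ j - ((χ i (g j) : kˣ) : k) • (QAux.au k n G χ j * QAux.au k n G χ i)) ⊗ₜ[k] 1 + QAux.γu k n G χ (g i * g j) ⊗ₜ[k] (QAux.au k n G χ i * QAux.au k n G χ j - ((χ i (g j) : kˣ) : k) • (QAux.au k n G χ j * QAux.au k n G χ i)) := (key i j hij).2 (Or.inl hv)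
      rw [show QAux.γu k n G χ (g i * g j) = QAux.γu k n G χ (g i) * QAux.γu k n G χ (g j) from (QAux.γu_mul _ _).symm] at hb
      have hL1 := QAux.L1 (QAux.au k n G χ i) (QAux.au k n G χ j) (QAux.γu k n G χ (g i)) (QAux.γu k n G χ (g j)) ((χ i (g j) : kˣ) : k) ((χ j (g i) : kˣ) : k)
        (by exact QAux.Δu_au k n G χ g i) (by exact QAux.Δu_au k n G χ g j)
        (QAux.au_γu i (g j)) (QAux.au_γu j (g i)) (QAux.γu_comm (g j) (g i))
      have hE0 := sub_eq_zero_of_eq (hL1.symm.trans hb)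
      have hE : ((1 : k) - ((χ i (g j) : kˣ) : k) * ((χ j (g i) : kˣ) : k)) • ((QAux.γu k n G χ (g i) * QAux.au k n G χ j) ⊗ₜ[k] QAux.au k n G χ i) = 0 := by
        have key1 : ∀ {M : Type} [AddCommGroup M] (X a : M), a = X + a - X := by
          intros; abel
        rw [← hE0]; exact key1 (M := QAux.Hu k n G χ ⊗[k] QAux.Hu k n G χ) _ _
      have hc := QAux.extract_c g i j _ hE
      have hk1 : (1 : k) = ((χ i (g j) : kˣ) : k) * ((χ j (g i) : kˣ) : k) := sub_eq_zero.mp hc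
      exact Units.ext (by simpa [Units.val_mul] using hk1.symm)
  · rintro ⟨c1, c2, c3⟩ H _ _ Γ a hgl hsp hcomm i j hij
    have hXY : ((Γ (g j) : Hˣ) : H) * ((Γ (g i) : Hˣ) : H)
        = ((Γ (g i) : Hˣ) : H) * ((Γ (g j) : Hˣ) : H) := by
      rw [← Units.val_mul, ← Units.val_mul, ← map_mul, ← map_mul, mul_comm]
    constructor
    · intro hor
      have hpq : χ i (g j) * χ j (g i) = (χ ⟨0, by omega⟩ (g ⟨0, by omega⟩))⁻¹ := by
        rcases hor with hv | hv
        · exact c2 i j hv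
        · rw [mul_comm]; exact c2 j i hv
      have hu1 : χ i (g i) * (χ i (g j) * χ j (g i)) = 1 := by
        rw [hpq, c1 i, mul_inv_cancel]
      have hPpq : ((χ i (g i) : kˣ) : k) * (((χ i (g j) : kˣ) : k) * ((χ j (g i) : kˣ) : k)) = 1 := by
        have : ((χ i (g i) * (χ i (g j) * χ j (g i)) : kˣ) : k) = ((1 : kˣ) : k) := by
          rw [hu1]
        simpa [Units.val_mul] using this
      have hL2 := QAux.L2 (a i) (a j) ((Γ (g i) : Hˣ) : H) ((Γ (g j) : Hˣ) : H)
        ((χ i (g i) : kˣ) : k) ((χ i (g j) : kˣ) : k) ((χ j (g i) : kˣ) : k) (hsp i) (hsp j) (hcomm i (g i)) (hcomm i (g j)) (hcomm j (g i)) hXY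
      rw [show ((χ i (g j) : kˣ) : k) * ((1 + ((χ i (g i) : kˣ) : k)) * (1 - ((χ i (g i) : kˣ) : k) * (((χ i (g j) : kˣ) : k) * ((χ j (g i) : kˣ) : k)))) = 0 from by rw [hPpq]; ring,
        show (1 + ((χ i (g i) : kˣ) : k)) * (1 - ((χ i (g i) : kˣ) : k) * (((χ i (g j) : kˣ) : k) * ((χ j (g i) : kˣ) : k))) = 0 from by rw [hPpq]; ring,
        show (1 - ((χ i (g j) : kˣ) : k) * ((χ j (g i) : kˣ) : k)) * (1 - ((χ i (g i) : kˣ) : k) * (((χ i (g j) : kˣ) : k) * ((χ j (g i) : kˣ) : k))) = 0 from by rw [hPpq]; ring] at hL2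
      simp only [zero_smul, add_zero, sub_zero] at hL2
      rw [show ((Γ (g i) : Hˣ) : H) * (((Γ (g i) : Hˣ) : H) * ((Γ (g j) : Hˣ) : H))
          = ((Γ (g i ^ 2 * g j) : Hˣ) : H) from by
        rw [← Units.val_mul, ← Units.val_mul, ← map_mul, ← map_mul,
          show g i * (g i * g j) = g i ^ 2 * g j from by rw [pow_two, mul_assoc]]] at hL2
      rw [← show ((χ i (g i * g j) : kˣ) : k) = ((χ i (g i) : kˣ) : k) * ((χ i (g j) : kˣ) : k) from by
        rw [map_mul, Units.val_mul]] at hL2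
      exact hL2
    · intro hor
      have hu1 : χ i (g j) * χ j (g i) = 1 := by
        rcases hor with hv | hv
        · exact c3 i j hv
        · rw [mul_comm]; exact c3 j i hv
      have hpq1 : ((χ i (g j) : kˣ) : k) * ((χ j (g i) : kˣ) : k) = 1 := by
        have : ((χ i (g j) * χ j (g i) : kˣ) : k) = ((1 : kˣ) : k) := by rw [hu1]
        simpa [Units.val_mul] using this
      have hL1 := QAux.L1 (a i) (a j) ((Γ (g i) : Hˣ) : H) ((Γ (g j) : Hˣ) : H)
        ((χ i (g j) : kˣ) : k) ((χ j (g i) : kˣ) : k) (hsp i) (hsp j) (hcomm i (g j)) (hcomm j (g i)) hXY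
      rw [show (1 : k) - ((χ i (g j) : kˣ) : k) * ((χ j (g i) : kˣ) : k) = 0 from by rw [hpq1]; ring] at hL1
      simp only [zero_smul, add_zero] at hL1
      rw [show ((Γ (g i) : Hˣ) : H) * ((Γ (g j) : Hˣ) : H)
          = ((Γ (g i * g j) : Hˣ) : H) from by
        rw [← Units.val_mul, ← map_mul]] at hL1
      exact hL1
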